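/- Let S be a string whose first character ♯ and last character $ each occur exactly once in S. Then every minimal rare word aub for S that occurs at least once in S (occ_S(aub) ≥ 1) is an extended bispecial factor of S; i.e., there exist characters a' ≠ a and b' ≠ b such that a'ub and aub' are substrings of S. -/

import Mathlib

set_option linter.unusedSectionVars false

/-- Number of occurrences of `w` as a substring of `S` (for `w = ε` this is `|S| + 1`). -/
def occ {α : Type*} [DecidableEq α] (S w : List α) : ℕ :=
  (List.range (S.length + 1)).countP
    (fun i => decide (i + w.length ≤ S.length ∧ (S.drop i).take w.length = w))

section Aux
variable {α : Type*} [DecidableEq α]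

lemma card_filter_range (n : ℕ) (p : ℕ → Prop) [DecidablePred p] :
    ((Finset.range n).filter p).card = (List.range n).countP (fun i => decide (p i)) := by
  rw [List.countP_eq_length_filter]
  rfl

lemma occAt_iff {S w : List α} (hw : w ≠ []) (i : ℕ) :
    (i + w.length ≤ S.length ∧ (S.drop i).take w.length = w) ↔ w <+: S.drop i := by
  constructor
  · rintro ⟨_, h2⟩
    exact List.prefix_iff_eq_take.2 h2.symm
  · intro h
    refine ⟨?_, (List.prefix_iff_eq_take.1 h).symm⟩
    have h1 := h.length_le
    rw [List.length_drop] at h1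
    have hw' : 0 < w.length := List.length_pos_iff.2 hw
    omega

lemma occ_eq (S w : List α) (hw : w ≠ []) :
    occ S w = ((Finset.range (S.length + 1)).filter (fun i => w <+: S.drop i)).card := by
  rw [card_filter_range, occ]
  apply List.countP_congr
  intro i _
  simpa using occAt_iff hw i

lemma occ_pos_exists {S w : List α} (hw : w ≠ []) (h : 1 ≤ occ S w) :
    ∃ i, w <+: S.drop i := by
  rw [occ] at h
  obtain ⟨i, _, hi⟩ := List.countP_pos_iff.1 h
  rw [decide_eq_true_iff] at hi
  exact ⟨i, (occAt_iff hw i).1 hi⟩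

lemma two_le_count {l : List α} {c : α} : ∀ {j k : ℕ}, j < k →
    l[j]? = some c → l[k]? = some c → 2 ≤ l.count c := by
  induction l with
  | nil => intro j k _ hj _; simp at hj
  | cons x t ih =>
    intro j k hjk hj hk
    cases j with
    | zero =>
      obtain ⟨k', rfl⟩ : ∃ k', k = k' + 1 := ⟨k - 1, by omega⟩
      simp only [List.getElem?_cons_zero, Option.some.injEq] at hj
      simp only [List.getElem?_cons_succ] at hk
      have hmem : c ∈ t := List.mem_of_getElem? hk
      rw [hj, List.count_cons_self]
      have := List.one_le_count_iff.2 hmem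
      omega
    | succ j' =>
      obtain ⟨k', rfl⟩ : ∃ k', k = k' + 1 := ⟨k - 1, by omega⟩
      simp only [List.getElem?_cons_succ] at hj hk
      have := ih (by omega : j' < k') hj hk
      rw [List.count_cons]
      omega

lemma prefix_getElem? {w t : List α} (h : w <+: t) {k : ℕ} (hk : k < w.length) :
    t[k]? = w[k]? := by
  obtain ⟨r, rfl⟩ := h
  exact List.getElem?_append_left hk

lemma cons_prefix_drop {S w : List α} {a : α} {i : ℕ} (h : (a :: w) <+: S.drop i) :
    S[i]? = some a ∧ w <+: S.drop (i + 1) := by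
  obtain ⟨r, hr⟩ := h
  constructor
  · have h0 : (S.drop i)[0]? = some a := by rw [← hr]; simp
    rwa [List.getElem?_drop, Nat.add_zero] at h0
  · refine ⟨r, ?_⟩
    have := congrArg (List.drop 1) hr
    simpa [List.drop_drop] using this

lemma cons_prefix_drop' {S w : List α} {a : α} {i : ℕ} (ha : S[i]? = some a)
    (h : w <+: S.drop (i + 1)) : (a :: w) <+: S.drop i := by
  have hi : i < S.length := by
    by_contra hx
    rw [List.getElem?_eq_none (by omega)] at ha
    simp at ha
  rw [List.drop_eq_getElem_cons hi]
  have hSi : S[i] = a := by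
    rw [List.getElem?_eq_getElem hi] at ha
    exact Option.some.inj ha
  rw [hSi]
  obtain ⟨r, hr⟩ := h
  exact ⟨r, by rw [List.cons_append, hr]⟩

lemma snoc_prefix_drop {S w : List α} {b : α} {i : ℕ} :
    (w ++ [b]) <+: S.drop i ↔ w <+: S.drop i ∧ S[i + w.length]? = some b := by
  constructor
  · rintro ⟨r, hr⟩
    rw [List.append_assoc] at hr
    refine ⟨⟨[b] ++ r, hr⟩, ?_⟩
    rw [← List.getElem?_drop, ← hr, List.getElem?_append_right (le_refl _)]
    simp
  · rintro ⟨⟨r, hr⟩, hb⟩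
    rw [← List.getElem?_drop, ← hr, List.getElem?_append_right (le_refl _)] at hb
    simp only [Nat.sub_self] at hb
    obtain ⟨r', rfl⟩ : ∃ r', r = b :: r' := by
      cases r with
      | nil => simp at hb
      | cons x r' =>
        simp only [List.getElem?_cons_zero, Option.some.injEq] at hb
        exact ⟨r', by rw [hb]⟩
    exact ⟨r', by rw [← hr]; simp⟩

lemma prefix_drop_isInfix {S w : List α} {i : ℕ} (h : w <+: S.drop i) : w <:+: S :=
  h.isInfix.trans (List.drop_suffix i S).isInfix

lemma exists_not_cond {n : ℕ} {P Q C : ℕ → Prop}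
    [DecidablePred P] [DecidablePred Q] [DecidablePred C]
    (f : ℕ → ℕ)
    (hf : ∀ i, i < n → Q i → C i → f i < n ∧ P (f i))
    (hinj : ∀ i j, Q i → C i → Q j → C j → f i = f j → i = j)
    (hlt : ((Finset.range n).filter P).card < ((Finset.range n).filter Q).card) :
    ∃ i, Q i ∧ ¬ C i := by
  have h1 : (((Finset.range n).filter Q).filter C).card
      ≤ ((Finset.range n).filter P).card := by
    apply Finset.card_le_card_of_injOn f
    · intro i hi
      simp only [Finset.mem_coe, Finset.mem_filter, Finset.mem_range] at hi ⊢
      obtain ⟨⟨hin, hq⟩, hc⟩ := hi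
      exact ⟨(hf i hin hq hc).1, (hf i hin hq hc).2⟩
    · intro i hi j hj hij
      simp only [Finset.coe_filter, Set.mem_setOf_eq, Finset.mem_filter,
        Finset.mem_range] at hi hj
      exact hinj i j hi.1.2 hi.2 hj.1.2 hj.2 hij
  have h2 : (((Finset.range n).filter Q).filter C).card
      + (((Finset.range n).filter Q).filter (fun i => ¬ C i)).card
      = ((Finset.range n).filter Q).card :=
    Finset.card_filter_add_card_filter_not C
  have h3 : 0 < (((Finset.range n).filter Q).filter (fun i => ¬ C i)).card := by omega
  obtain ⟨i, hi⟩ := Finset.card_pos.1 h3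
  simp only [Finset.mem_filter, Finset.mem_range] at hi
  exact ⟨i, hi.1.2, hi.2⟩

end Aux

theorem mrw_occurring_is_ebf {α : Type*} [DecidableEq α]
    (S u : List α) (a b : α) (hS : S ≠ [])
    (hfirst : S.count (S.head hS) = 1)
    (hlast : S.count (S.getLast hS) = 1)
    (hau : occ S (a :: (u ++ [b])) < occ S (a :: u))
    (hub : occ S (a :: (u ++ [b])) < occ S (u ++ [b]))
    (hocc : 1 ≤ occ S (a :: (u ++ [b]))) :
    (∃ a' : α, a' ≠ a ∧ (a' :: (u ++ [b])) <:+: S) ∧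
    (∃ b' : α, b' ≠ b ∧ (a :: (u ++ [b'])) <:+: S) := by
  have hSlen : 0 < S.length := List.length_pos_iff.2 hS
  set w : List α := u ++ [b] with hw
  have hwne : w ≠ [] := by simp [hw]
  have hwpos : 0 < w.length := List.length_pos_iff.2 hwne
  -- an actual occurrence of a::w
  obtain ⟨j, hj⟩ : ∃ j, (a :: w) <+: S.drop j :=
    occ_pos_exists (by simp) hocc
  obtain ⟨hja, hjw⟩ := cons_prefix_drop hj
  constructor
  · -- left extension
    have hlt : ((Finset.range (S.length + 1)).filter
          (fun i => (a :: w) <+: S.drop i)).card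
        < ((Finset.range (S.length + 1)).filter (fun i => w <+: S.drop i)).card := by
      rw [← occ_eq S (a :: w) (by simp), ← occ_eq S w hwne]
      exact hub
    obtain ⟨i, hQ, hC⟩ := exists_not_cond (P := fun i => (a :: w) <+: S.drop i)
      (Q := fun i => w <+: S.drop i)
      (C := fun i => 1 ≤ i ∧ (a :: w) <+: S.drop (i - 1))
      (fun i => i - 1)
      (by
        intro i hi _ hc
        exact ⟨(by omega : i - 1 < S.length + 1), hc.2⟩)
      (by
        intro i j _ hci _ hcj hij
        have hij' : i - 1 = j - 1 := hij
        omega)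
      hlt
    rcases Nat.eq_zero_or_pos i with rfl | hipos
    · -- w is a prefix of S : contradiction with uniqueness of the first letter
      exfalso
      rw [List.drop_zero] at hQ
      obtain ⟨c, hc⟩ : ∃ c, w[0]? = some c :=
        ⟨w[0], List.getElem?_eq_getElem hwpos⟩
      have h0 : S[0]? = some c := by
        rw [prefix_getElem? hQ hwpos]; exact hc
      have h1 : S[j + 1]? = some c := by
        rw [← Nat.add_zero (j + 1), ← List.getElem?_drop,
          prefix_getElem? hjw hwpos]
        exact hc
      have hchead : c = S.head hS := by
        have : S[0]? = some (S.head hS) := by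
          rw [List.head_eq_getElem]
          exact List.getElem?_eq_getElem hSlen
        rw [this] at h0
        exact (Option.some.inj h0).symm
      have := two_le_count (by omega : 0 < j + 1) h0 h1
      rw [← hchead] at hfirst
      omega
    · obtain ⟨i', rfl⟩ : ∃ i', i = i' + 1 := ⟨i - 1, by omega⟩
      have hi' : i' < S.length := by
        have := hQ.length_le
        rw [List.length_drop] at this
        omega
      have hc : S[i']? = some S[i'] := List.getElem?_eq_getElem hi'
      have hpre : (S[i'] :: w) <+: S.drop i' := cons_prefix_drop' hc hQ
      refine ⟨S[i'], ?_, prefix_drop_isInfix hpre⟩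
      intro hcontra
      apply hC
      refine ⟨by omega, ?_⟩
      simpa [hcontra] using hpre
  · -- right extension
    set v : List α := a :: u with hv
    have hvne : v ≠ [] := by simp [hv]
    have hvpos : 0 < v.length := List.length_pos_iff.2 hvne
    have hcons : a :: w = v ++ [b] := by simp [hv, hw]
    have hlt : ((Finset.range (S.length + 1)).filter
          (fun i => (v ++ [b]) <+: S.drop i)).card
        < ((Finset.range (S.length + 1)).filter (fun i => v <+: S.drop i)).card := by
      rw [← occ_eq S (v ++ [b]) (by simp), ← occ_eq S v hvne]
      rw [← hcons]
      exact hau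
    obtain ⟨i, hQ, hC⟩ := exists_not_cond (P := fun i => (v ++ [b]) <+: S.drop i)
      (Q := fun i => v <+: S.drop i)
      (C := fun i => S[i + v.length]? = some b)
      (fun i => i)
      (by
        intro i hi hq hc
        exact ⟨hi, snoc_prefix_drop.2 ⟨hq, hc⟩⟩)
      (by intro i j _ _ _ _ h; exact h)
      hlt
    -- hQ : v <+: S.drop i,  hC : S[i + v.length]? ≠ some b
    have hjv : (v ++ [b]) <+: S.drop j := by rw [← hcons]; exact hj
    obtain ⟨hjv', hjb⟩ := snoc_prefix_drop.1 hjv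
    cases hcase : S[i + v.length]? with
    | some c =>
      have hcb : c ≠ b := by
        intro h; rw [h] at hcase; exact hC hcase
      have hpre : (v ++ [c]) <+: S.drop i := snoc_prefix_drop.2 ⟨hQ, hcase⟩
      refine ⟨c, hcb, ?_⟩
      have : (a :: (u ++ [c])) = v ++ [c] := by simp [hv]
      rw [this]
      exact prefix_drop_isInfix hpre
    | none =>
      -- v is a suffix of S : contradiction with uniqueness of the last letter
      exfalso
      have hiend : S.length ≤ i + v.length := by
        by_contra hx
        rw [List.getElem?_eq_getElem (by omega)] at hcase
        simp at hcase
      have hjlen : j + v.length < S.length := by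
        have hlen := hjv.length_le
        rw [List.length_drop] at hlen
        have h2 : (v ++ [b]).length = v.length + 1 := by simp
        omega
      set k : ℕ := v.length - 1 with hk
      obtain ⟨c, hc⟩ : ∃ c, v[k]? = some c :=
        ⟨v[k]'(by omega), List.getElem?_eq_getElem (by omega)⟩
      have hik : S[i + k]? = some c := by
        rw [← List.getElem?_drop, prefix_getElem? hQ (by omega)]
        exact hc
      have hjk : S[j + k]? = some c := by
        rw [← List.getElem?_drop, prefix_getElem? hjv' (by omega)]
        exact hc
      have hikub : i + k < S.length := by
        by_contra hx
        rw [List.getElem?_eq_none (by omega)] at hik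
        simp at hik
      have hikend : i + k = S.length - 1 := by omega
      have hclast : c = S.getLast hS := by
        have hlastg : S[i + k]? = some (S.getLast hS) := by
          rw [List.getLast_eq_getElem]
          rw [hikend]
          exact List.getElem?_eq_getElem (by omega)
        rw [hlastg] at hik
        exact (Option.some.inj hik).symm
      have := two_le_count (by omega : j + k < i + k) hjk hik
      rw [← hclast] at hlast
      omega
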